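/- Every element ĝ of the C-group Ĝ_O associated to an equipped group (G,O) can be written as ĝ = ĝ_1 ĝ_2^{-1} where ĝ_1 and ĝ_2 are positive elements (products of the generators y_g). -/

import Mathlib

variable {G : Type*} [Group G]

/-- Relators of the C-group `Ĝ_O` associated to an equipped group `(G,O)`:
`y_{g₁} y_{g₂} = y_{g₂} y_{g₂⁻¹ g₁ g₂}` and `y_{g₁} y_{g₂} = y_{g₁ g₂ g₁⁻¹} y_{g₁}`. -/
def cGroupRels (O : Set G) : Set (FreeGroup O) :=
  {w | (∃ (a b : O) (h : (b : G)⁻¹ * a * b ∈ O),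
          w = FreeGroup.of a * FreeGroup.of b *
            (FreeGroup.of b * FreeGroup.of (⟨(b : G)⁻¹ * a * b, h⟩ : O))⁻¹) ∨
       (∃ (a b : O) (h : (a : G) * b * (a : G)⁻¹ ∈ O),
          w = FreeGroup.of a * FreeGroup.of b *
            (FreeGroup.of (⟨(a : G) * b * (a : G)⁻¹, h⟩ : O) * FreeGroup.of a)⁻¹)}

/-- The C-group `Ĝ_O` associated to the equipped group `(G,O)`. -/
abbrev CGroup (O : Set G) : Type _ := PresentedGroup (cGroupRels O)

/-- The canonical homomorphism `γ : Ĝ_O → G`, `y_g ↦ g`. -/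
def cGroupGamma (O : Set G) : CGroup O →* G :=
  PresentedGroup.toGroup (f := fun a : O => (a : G)) (by
    rintro r (⟨a, b, hm, rfl⟩ | ⟨a, b, hm, rfl⟩) <;> (simp <;> group))

/-- Positive elements of `Ĝ_O`: products of the generators `y_g`. -/
def CGroup.Positive {O : Set G} (x : CGroup O) : Prop :=
  x ∈ Submonoid.closure (Set.range (fun a : O => PresentedGroup.of (rels := cGroupRels O) a))

lemma cGroup_rel (O : Set G) (hO : ∀ g ∈ O, ∀ h : G, h⁻¹ * g * h ∈ O) (a b : O) :
    PresentedGroup.of (rels := cGroupRels O) a * PresentedGroup.of b =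
      PresentedGroup.of b *
        PresentedGroup.of (⟨(b : G)⁻¹ * a * b, hO a a.2 b⟩ : O) := by
  have hr : (FreeGroup.of a * FreeGroup.of b *
      (FreeGroup.of b * FreeGroup.of (⟨(b : G)⁻¹ * a * b, hO a a.2 b⟩ : O))⁻¹)
      ∈ cGroupRels O := Or.inl ⟨a, b, hO a a.2 b, rfl⟩
  have h1 : (QuotientGroup.mk (FreeGroup.of a * FreeGroup.of b *
      (FreeGroup.of b * FreeGroup.of (⟨(b : G)⁻¹ * a * b, hO a a.2 b⟩ : O))⁻¹) :
      PresentedGroup (cGroupRels O)) = 1 :=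
    (QuotientGroup.eq_one_iff _).2 (Subgroup.subset_normalClosure hr)
  have := h1
  simp only [QuotientGroup.mk_mul, QuotientGroup.mk_inv] at this
  have h2 : PresentedGroup.of (rels := cGroupRels O) a * PresentedGroup.of b *
      (PresentedGroup.of b *
        PresentedGroup.of (⟨(b : G)⁻¹ * a * b, hO a a.2 b⟩ : O))⁻¹ = 1 := this
  exact mul_inv_eq_one.mp h2

lemma cGroup_conj_pos (O : Set G) (hO : ∀ g ∈ O, ∀ h : G, h⁻¹ * g * h ∈ O)
    {p q : CGroup O} (hp : CGroup.Positive p) (hq : CGroup.Positive q) :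
    CGroup.Positive (q⁻¹ * p * q) := by
  induction hq using Submonoid.closure_induction generalizing p with
  | one => simpa using hp
  | mem b hb =>
    obtain ⟨b, rfl⟩ := hb
    induction hp using Submonoid.closure_induction with
    | one => simpa [CGroup.Positive] using Submonoid.one_mem _
    | mem a ha =>
      obtain ⟨a, rfl⟩ := ha
      have := cGroup_rel O hO a b
      have key : (PresentedGroup.of (rels := cGroupRels O) b)⁻¹ *
          PresentedGroup.of a * PresentedGroup.of b =
          PresentedGroup.of (⟨(b : G)⁻¹ * a * b, hO a a.2 b⟩ : O) := by
        rw [mul_assoc, this]; group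
      rw [key]
      exact Submonoid.subset_closure ⟨_, rfl⟩
    | mul x y hx hy ihx ihy =>
      have : (PresentedGroup.of (rels := cGroupRels O) b)⁻¹ * (x * y) *
          PresentedGroup.of b =
          ((PresentedGroup.of (rels := cGroupRels O) b)⁻¹ * x * PresentedGroup.of b) *
          ((PresentedGroup.of (rels := cGroupRels O) b)⁻¹ * y * PresentedGroup.of b) := by
        group
      rw [this]
      exact Submonoid.mul_mem _ ihx ihy
  | mul x y hx hy ihx ihy =>
    have : (x * y)⁻¹ * p * (x * y) = y⁻¹ * (x⁻¹ * p * x) * y := by group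
    rw [this]
    exact ihy (ihx hp)

/-- Lemma 1.2: every element of the C-group `Ĝ_O` associated to an equipped group
`(G,O)` (with `O` conjugation-invariant, `1 ∉ O`) can be written as `ĝ₁ ĝ₂⁻¹` with
`ĝ₁, ĝ₂` positive. -/
theorem cGroup_eq_positive_mul_inv_positive (O : Set G)
    (hO : ∀ g ∈ O, ∀ h : G, h⁻¹ * g * h ∈ O) (h1 : (1 : G) ∉ O)
    (x : CGroup O) :
    ∃ g₁ g₂ : CGroup O, CGroup.Positive g₁ ∧ CGroup.Positive g₂ ∧ x = g₁ * g₂⁻¹ := by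
  have hx : x ∈ Subgroup.closure (Set.range (fun a : O =>
      PresentedGroup.of (rels := cGroupRels O) a)) := by
    rw [PresentedGroup.closure_range_of]; trivial
  induction hx using Subgroup.closure_induction with
  | one => exact ⟨1, 1, Submonoid.one_mem _, Submonoid.one_mem _, by simp⟩
  | mem a ha =>
    exact ⟨a, 1, Submonoid.subset_closure ha, Submonoid.one_mem _, by simp⟩
  | inv a _ ih =>
    obtain ⟨g₁, g₂, h₁, h₂, rfl⟩ := ih
    exact ⟨g₂, g₁, h₂, h₁, by group⟩
  | mul a b _ _ iha ihb =>
    obtain ⟨g₁, g₂, h₁, h₂, rfl⟩ := iha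
    obtain ⟨k₁, k₂, hk₁, hk₂, rfl⟩ := ihb
    refine ⟨g₁ * (g₂⁻¹ * k₁ * g₂), k₂ * g₂,
      Submonoid.mul_mem _ h₁ (cGroup_conj_pos O hO hk₁ h₂),
      Submonoid.mul_mem _ hk₂ h₂, by group⟩
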